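/- arXiv:1812.01913 — 3 statements merged into one kernel-verified Lean document; each statement's English description precedes it below -/
import Mathlib

section
/- Let k be a field and n ≥ 1. In the polynomial ring k[x_1,…,x_n,y_1,…,y_n], the ideal generated by all 2×2 minors x_i·y_j − x_j·y_i (for 1 ≤ i < j ≤ n) of the generic 2×n matrix with rows (x_1,…,x_n) and (y_1,…,y_n) is a prime ideal. (This is the paper's claim, in the proof that the singular locus C^{sing}_{a,b} is reduced and irreducible, that the equations c_0 = 0, d_0 = 0, c_i d_j − c_j d_i = 0 define a reduced and irreducible subscheme.) -/
open MvPolynomial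
namespace MinorsPrime
variable {k : Type*} [Field k] {n : ℕ}

noncomputable def I (k : Type*) [Field k] (n : ℕ) : Ideal (MvPolynomial (Fin n ⊕ Fin n) k) :=
  Ideal.span { p : MvPolynomial (Fin n ⊕ Fin n) k |
        ∃ i j : Fin n,
          p = MvPolynomial.X (Sum.inl i) * MvPolynomial.X (Sum.inr j) -
              MvPolynomial.X (Sum.inl j) * MvPolynomial.X (Sum.inr i) }

noncomputable def P (k : Type*) [Field k] {n : ℕ} (A B : Multiset (Fin n)) :
    MvPolynomial (Fin n ⊕ Fin n) k :=
  (A.map fun i => X (Sum.inl i)).prod * (B.map fun i => X (Sum.inr i)).prod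

lemma P_cons_left (a : Fin n) (A B : Multiset (Fin n)) :
    P k (a ::ₘ A) B = X (Sum.inl a) * P k A B := by
  simp [P, Multiset.map_cons, Multiset.prod_cons, mul_assoc]

lemma P_cons_right (a : Fin n) (A B : Multiset (Fin n)) :
    P k A (a ::ₘ B) = X (Sum.inr a) * P k A B := by
  simp [P, Multiset.map_cons, Multiset.prod_cons]; ring

lemma X_pow_mul_P_left (i : Fin n) (b : ℕ) (A B : Multiset (Fin n)) :
    X (Sum.inl i) ^ b * P k A B = P k (Multiset.replicate b i + A) B := by
  induction b with
  | zero => simp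
  | succ b ih =>
    rw [Multiset.replicate_succ, Multiset.cons_add, P_cons_left, ← ih, pow_succ]
    ring

lemma X_pow_mul_P_right (i : Fin n) (b : ℕ) (A B : Multiset (Fin n)) :
    X (Sum.inr i) ^ b * P k A B = P k A (Multiset.replicate b i + B) := by
  induction b with
  | zero => simp
  | succ b ih =>
    rw [Multiset.replicate_succ, Multiset.cons_add, P_cons_right, ← ih, pow_succ]
    ring

/-- Every monomial (with coefficient 1) is some `P A B`. -/
lemma exists_P (e : (Fin n ⊕ Fin n) →₀ ℕ) :
    ∃ A B : Multiset (Fin n), (monomial e 1 : MvPolynomial (Fin n ⊕ Fin n) k) = P k A B := by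
  induction e using Finsupp.induction with
  | zero => exact ⟨0, 0, by simp [P]⟩
  | single_add a b f _ _ ih =>
    obtain ⟨A, B, hAB⟩ := ih
    have key : (monomial (Finsupp.single a b + f) 1 : MvPolynomial (Fin n ⊕ Fin n) k)
        = X a ^ b * monomial f 1 := by
      rw [X_pow_eq_monomial, monomial_mul, one_mul]
    cases a with
    | inl i =>
      exact ⟨Multiset.replicate b i + A, B, by
        rw [key, hAB, X_pow_mul_P_left]⟩
    | inr i =>
      exact ⟨A, Multiset.replicate b i + B, by
        rw [key, hAB, X_pow_mul_P_right]⟩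

lemma cong : ∀ (d : ℕ) (A B A' B' : Multiset (Fin n)), Multiset.card B = d →
    Multiset.card B' = d → A + B = A' + B' → P k A B - P k A' B' ∈ I k n := by
  intro d
  induction d with
  | zero =>
    intro A B A' B' hB hB' h
    rw [Multiset.card_eq_zero] at hB hB'
    subst hB; subst hB'
    simp only [add_zero] at h
    subst h
    simp
  | succ d ih =>
    intro A B A' B' hB hB' h
    obtain ⟨j', B'', rfl⟩ : ∃ j' B'', B' = j' ::ₘ B'' := by
      obtain ⟨j', hj'⟩ := Multiset.exists_mem_of_ne_zero (s := B')
        (by intro h0; rw [h0] at hB'; simp at hB')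
      exact ⟨j', _, (Multiset.cons_erase hj').symm⟩
    by_cases hj : j' ∈ B
    · obtain ⟨B₀, rfl⟩ := Multiset.exists_cons_of_mem hj
      have h₀ : A + B₀ = A' + B'' := by
        ext a
        have := congrArg (Multiset.count a) h
        simp only [Multiset.count_add, Multiset.count_cons] at this ⊢
        omega
      have hmem := ih A B₀ A' B'' (by simpa using hB) (by simpa using hB') h₀
      have := Ideal.mul_mem_left _ (X (Sum.inr j')) hmem
      rw [mul_sub, ← P_cons_right, ← P_cons_right] at this
      exact this
    · have hjA : j' ∈ A := by
        have : j' ∈ A + B := by rw [h]; simp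
        rcases Multiset.mem_add.1 this with h1 | h1
        · exact h1
        · exact absurd h1 hj
      obtain ⟨A₀, rfl⟩ := Multiset.exists_cons_of_mem hjA
      obtain ⟨j, B₀, rfl⟩ : ∃ j B₀, B = j ::ₘ B₀ := by
        obtain ⟨j, hjm⟩ := Multiset.exists_mem_of_ne_zero (s := B)
          (by intro h0; rw [h0] at hB; simp at hB)
        exact ⟨j, _, (Multiset.cons_erase hjm).symm⟩
      have hswap : P k (j' ::ₘ A₀) (j ::ₘ B₀) - P k (j ::ₘ A₀) (j' ::ₘ B₀) ∈ I k n := by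
        have hg : (X (Sum.inl j') * X (Sum.inr j) - X (Sum.inl j) * X (Sum.inr j') :
            MvPolynomial (Fin n ⊕ Fin n) k) ∈ I k n :=
          Ideal.subset_span ⟨j', j, rfl⟩
        have := Ideal.mul_mem_left _ (P k A₀ B₀) hg
        convert this using 1
        rw [P_cons_left, P_cons_right, P_cons_left, P_cons_right]
        ring
      have h₂ : (j ::ₘ A₀) + B₀ = A' + B'' := by
        ext a
        have := congrArg (Multiset.count a) h
        simp only [Multiset.count_add, Multiset.count_cons] at this ⊢
        omega
      have hmem := ih (j ::ₘ A₀) B₀ A' B'' (by simpa using hB) (by simpa using hB') h₂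
      have h₃ := Ideal.mul_mem_left _ (X (Sum.inr j')) hmem
      rw [mul_sub, ← P_cons_right, ← P_cons_right] at h₃
      have := Ideal.add_mem _ hswap h₃
      convert this using 1
      ring

noncomputable def phi (k : Type*) [Field k] (n : ℕ) :
    MvPolynomial (Fin n ⊕ Fin n) k →ₐ[k] MvPolynomial (Option (Fin n)) k :=
  MvPolynomial.aeval (Sum.elim (fun i => X (some i)) (fun i => X none * X (some i)))

noncomputable def wexp (C : Multiset (Fin n)) (d : ℕ) : Option (Fin n) →₀ ℕ :=
  Finsupp.single none d + Finsupp.mapDomain some C.toFinsupp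

lemma toFinsupp_cons (a : Fin n) (s : Multiset (Fin n)) :
    Multiset.toFinsupp (a ::ₘ s) = Finsupp.single a 1 + Multiset.toFinsupp s := by
  ext b
  simp only [Multiset.toFinsupp_apply, Multiset.count_cons, Finsupp.add_apply,
    Finsupp.single_apply]
  by_cases h : a = b <;> simp [h, eq_comm] <;> omega

lemma phi_P (A B : Multiset (Fin n)) :
    phi k n (P k A B) = X none ^ Multiset.card B *
      ((A + B).map fun i => (X (some i) : MvPolynomial (Option (Fin n)) k)).prod := by
  simp only [P, map_mul, map_multiset_prod, Multiset.map_map, Function.comp]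
  simp only [phi, aeval_X, Sum.elim_inl, Sum.elim_inr]
  rw [Multiset.prod_map_mul (f := fun _ => (X none : MvPolynomial (Option (Fin n)) k))
    (g := fun i => X (some i))]
  rw [Multiset.map_add, Multiset.prod_add]
  simp [Multiset.map_const', Multiset.prod_replicate]
  ring

lemma Q_mono (C : Multiset (Fin n)) (d : ℕ) :
    (X none ^ d * ((C.map fun i => (X (some i) : MvPolynomial (Option (Fin n)) k)).prod)
      : MvPolynomial (Option (Fin n)) k) = monomial (wexp C d) 1 := by
  have h2 : ∀ C : Multiset (Fin n),
      ((C.map fun i => (X (some i) : MvPolynomial (Option (Fin n)) k)).prod)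
        = monomial (Finsupp.mapDomain some C.toFinsupp) 1 := by
    intro C
    induction C using Multiset.induction_on with
    | empty => simp [monomial_eq]
    | cons a s ih =>
      rw [Multiset.map_cons, Multiset.prod_cons, ih, X, monomial_mul, toFinsupp_cons,
        Finsupp.mapDomain_add, Finsupp.mapDomain_single, one_mul]
  rw [h2, X_pow_eq_monomial, monomial_mul, one_mul, wexp]

noncomputable def rep (k : Type*) [Field k] {n : ℕ} (w : Option (Fin n) →₀ ℕ) :
    MvPolynomial (Fin n ⊕ Fin n) k :=
  P k (↑(((Finsupp.toMultiset w.some).toList).drop (w none)))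
      (↑(((Finsupp.toMultiset w.some).toList).take (w none)))

noncomputable def L (k : Type*) [Field k] (n : ℕ) :
    MvPolynomial (Option (Fin n)) k →ₗ[k] MvPolynomial (Fin n ⊕ Fin n) k :=
  (basisMonomials (Option (Fin n)) k).constr k (rep k)

lemma L_monomial (w : Option (Fin n) →₀ ℕ) : L k n (monomial w 1) = rep k w := by
  have := Module.Basis.constr_basis (basisMonomials (Option (Fin n)) k) k (rep k) w
  rwa [coe_basisMonomials] at this

lemma wexp_none (C : Multiset (Fin n)) (d : ℕ) : wexp C d none = d := by
  have h := Finsupp.mapDomain_notin_range (f := (some : Fin n → Option (Fin n)))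
    C.toFinsupp none (by simp)
  simp [wexp, h]

lemma wexp_some (C : Multiset (Fin n)) (d : ℕ) : (wexp C d).some = C.toFinsupp := by
  ext a
  simp [wexp, Finsupp.mapDomain_apply (Option.some_injective _)]

lemma rep_wexp (C : Multiset (Fin n)) (d : ℕ) (hd : d ≤ Multiset.card C) :
    ∃ A₁ B₁ : Multiset (Fin n), rep k (wexp C d) = P k A₁ B₁ ∧ A₁ + B₁ = C ∧
      Multiset.card B₁ = d := by
  refine ⟨↑((C.toList).drop d), ↑((C.toList).take d), ?_, ?_, ?_⟩
  · rw [rep, wexp_none, wexp_some, Multiset.toFinsupp_toMultiset]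
  · rw [add_comm, Multiset.coe_add, List.take_append_drop, Multiset.coe_toList]
  · rw [Multiset.coe_card, List.length_take, Multiset.length_toList]
    omega

lemma P_sub_L (A B : Multiset (Fin n)) :
    P k A B - L k n (phi k n (P k A B)) ∈ I k n := by
  rw [phi_P, Q_mono, L_monomial]
  obtain ⟨A₁, B₁, hrep, hsum, hcard⟩ :=
    rep_wexp (k := k) (A + B) (Multiset.card B) (by simp)
  rw [hrep]
  exact cong (Multiset.card B) A B A₁ B₁ rfl hcard (by rw [hsum])

lemma sub_L_mem (f : MvPolynomial (Fin n ⊕ Fin n) k) :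
    f - L k n (phi k n f) ∈ I k n := by
  induction f using MvPolynomial.induction_on' with
  | monomial e c =>
    have h1 : (monomial e c : MvPolynomial (Fin n ⊕ Fin n) k) = c • monomial e 1 := by
      rw [smul_monomial, smul_eq_mul, mul_one]
    rw [h1, map_smul, map_smul, ← smul_sub]
    have hm : monomial e 1 - L k n (phi k n (monomial e 1)) ∈ I k n := by
      obtain ⟨A, B, hAB⟩ := exists_P (k := k) e
      rw [hAB]; exact P_sub_L A B
    exact Submodule.smul_mem ((I k n).restrictScalars k) c hm
  | add p q hp hq =>
    have := Ideal.add_mem _ hp hq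
    convert this using 1
    rw [map_add, map_add]
    ring

lemma I_eq_ker : I k n = RingHom.ker (phi k n).toRingHom := by
  apply le_antisymm
  · rw [I, Ideal.span_le]
    rintro p ⟨i, j, rfl⟩
    simp only [SetLike.mem_coe, RingHom.mem_ker, AlgHom.toRingHom_eq_coe, RingHom.coe_coe,
      map_sub, map_mul]
    simp only [phi, aeval_X, Sum.elim_inl, Sum.elim_inr]
    ring
  · intro f hf
    have h0 : phi k n f = 0 := hf
    have := sub_L_mem f
    rwa [h0, map_zero, sub_zero] at this

theorem I_isPrime : (I k n).IsPrime := by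
  rw [I_eq_ker]
  exact RingHom.ker_isPrime _

end MinorsPrime

/-- The ideal of 2×2 minors of the generic 2×n matrix over a field is prime. -/
theorem minors_ideal_isPrime (k : Type*) [Field k] (n : ℕ) (hn : 1 ≤ n) :
    (Ideal.span { p : MvPolynomial (Fin n ⊕ Fin n) k |
        ∃ i j : Fin n,
          p = MvPolynomial.X (Sum.inl i) * MvPolynomial.X (Sum.inr j) -
              MvPolynomial.X (Sum.inl j) * MvPolynomial.X (Sum.inr i) }).IsPrime :=
  MinorsPrime.I_isPrime
end

section
/- Let A = ℤ × ℤ × ℤ be the free abelian group with basis elements c = (1,0,0), u = (0,1,0), v = (0,0,1), and let H be the subgroup of A generated by the two elements 33·u + 34·v − 42·c and c − u − v. Then the quotient group A/H is an infinite cyclic group (free abelian of rank 1) generated by the image of c. (This is the computation in the proof of Theorem 3.9 that Pic(M_4) = Pic(F^3_{2,3})/⟨c_1 − u − v⟩ is freely generated by c_1 = λ_1, where Pic(F^3_{2,3}) = ℤ⟨c_1,u,v⟩/⟨33u + 34v − 42c_1⟩.) -/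
/-- The homomorphism ℤ³ → ℤ, (a,b,d) ↦ a − 8b + 9d, which kills the relations. -/
def picPhi : ℤ × ℤ × ℤ →+ ℤ where
  toFun p := p.1 - 8 * p.2.1 + 9 * p.2.2
  map_zero' := by simp
  map_add' p q := by simp; ring

/-- Pic(M₄) is free abelian of rank 1, generated by the image of c = λ₁: the quotient
of ℤ³ by ⟨33u + 34v − 42c, c − u − v⟩ is infinite cyclic on the image of c. -/
theorem pic_M4 :
    let c : ℤ × ℤ × ℤ := (1, 0, 0)
    let u : ℤ × ℤ × ℤ := (0, 1, 0)
    let v : ℤ × ℤ × ℤ := (0, 0, 1)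
    let H : AddSubgroup (ℤ × ℤ × ℤ) :=
      AddSubgroup.closure {(33 : ℤ) • u + (34 : ℤ) • v - (42 : ℤ) • c, c - u - v}
    (∀ x : (ℤ × ℤ × ℤ) ⧸ H, ∃ k : ℤ, k • (QuotientAddGroup.mk' H c) = x) ∧
      ∀ k : ℤ, k • (QuotientAddGroup.mk' H c) = 0 → k = 0 := by
  intro c u v H
  have hg1 : (33 : ℤ) • u + (34 : ℤ) • v - (42 : ℤ) • c ∈ H :=
    AddSubgroup.subset_closure (by simp)
  have hg2 : c - u - v ∈ H := AddSubgroup.subset_closure (by simp)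
  constructor
  · intro x
    induction x using QuotientAddGroup.induction_on with
    | H p =>
      refine ⟨p.1 - 8 * p.2.1 + 9 * p.2.2, ?_⟩
      rw [QuotientAddGroup.mk'_apply, ← QuotientAddGroup.mk_zsmul, QuotientAddGroup.eq]
      have key : -((p.1 - 8 * p.2.1 + 9 * p.2.2) • c) + p =
          (p.2.2 - p.2.1) • ((33 : ℤ) • u + (34 : ℤ) • v - (42 : ℤ) • c) +
            (33 * p.2.2 - 34 * p.2.1) • (c - u - v) := by
        simp [c, u, v, Prod.ext_iff]
        refine ⟨?_, ?_, ?_⟩ <;> first | trivial | ring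
      rw [key]
      exact AddSubgroup.add_mem _ (AddSubgroup.zsmul_mem _ hg1 _)
        (AddSubgroup.zsmul_mem _ hg2 _)
  · intro k hk
    have hH : H ≤ picPhi.ker := by
      apply AddSubgroup.closure_le _ |>.mpr
      intro g hg
      rcases hg with hg | hg <;>
        · subst hg; simp [AddMonoidHom.mem_ker, picPhi, c, u, v]
    rw [QuotientAddGroup.mk'_apply, ← QuotientAddGroup.mk_zsmul,
      QuotientAddGroup.eq_zero_iff] at hk
    have := hH hk
    simpa [AddMonoidHom.mem_ker, picPhi, c] using this
end

section
/- Let A = ℤ × ℤ be the free abelian group with basis elements c = (1,0) and s = (0,1), let H be the subgroup of A generated by 27·s − 36·c and c − s, and let q : A → A/H be the quotient map. Then 9 · q(c) = 0 in A/H, and for every integer 0 < m < 9, m · q(c) ≠ 0. (This pins down, in the proof of Theorem 3.4 and Corollary 3.5, that the image of c_1 = λ_1 in Pic(U_3) has exact order 9, so that the hyperelliptic divisor class satisfies [H_3] = 9·λ_1.) -/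
/-- The image of c = λ₁ in Pic(U₃) = ℤ²/⟨27s − 36c, c − s⟩ has exact order 9. -/
theorem order_of_lambda1_U3 :
    let c : ℤ × ℤ := (1, 0)
    let s : ℤ × ℤ := (0, 1)
    let H : AddSubgroup (ℤ × ℤ) :=
      AddSubgroup.closure {(27 : ℤ) • s - (36 : ℤ) • c, c - s}
    (9 : ℤ) • (QuotientAddGroup.mk' H c) = 0 ∧
      ∀ m : ℤ, 0 < m → m < 9 → m • (QuotientAddGroup.mk' H c) ≠ 0 := by
  intro c s H
  have hc : c = ((1 : ℤ), (0 : ℤ)) := rfl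
  have hs : s = ((0 : ℤ), (1 : ℤ)) := rfl
  have hmem : ∀ x ∈ H, (9 : ℤ) ∣ x.1 + x.2 := by
    intro x hx
    induction hx using AddSubgroup.closure_induction with
    | mem y hy =>
        rcases hy with hy | hy <;> subst hy <;> simp [hc, hs]
    | zero => simp
    | add a b _ _ ha hb => simp only [Prod.fst_add, Prod.snd_add]; omega
    | neg a _ ha => simp only [Prod.fst_neg, Prod.snd_neg]; omega
  have key : (9 : ℤ) • c ∈ H := by
    have h1 : (27 : ℤ) • s - (36 : ℤ) • c ∈ H :=
      AddSubgroup.subset_closure (by left; rfl)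
    have h2 : c - s ∈ H := AddSubgroup.subset_closure (by right; rfl)
    have heq : (9 : ℤ) • c = -((27 : ℤ) • s - (36 : ℤ) • c) + (-27 : ℤ) • (c - s) := by
      simp [hc, hs, Prod.ext_iff]
    rw [heq]
    exact H.add_mem (H.neg_mem h1) (H.zsmul_mem h2 _)
  constructor
  · rw [← map_zsmul]
    exact (QuotientAddGroup.eq_zero_iff _).mpr key
  · intro m hm1 hm2 h
    rw [← map_zsmul] at h
    have hmc : m • c ∈ H := (QuotientAddGroup.eq_zero_iff _).mp h
    have := hmem _ hmc
    simp [hc] at this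
    omega
end
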